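/- Consider the LP relaxation of the multiple-choice knapsack problem: maximize ∑_{i,j} v_{ij} z_{ij} subject to ∑_{i,j} c_{ij} z_{ij} ≤ C, ∑_j z_{ij} = 1 for each i, and z_{ij} ≥ 0. If the LP is feasible, then there exists an optimal solution in which at most one group i has more than one index j with z_{ij} > 0. -/
import Mathlib
open Finset

lemma push_lemma {n m : ℕ} (z d : Fin n → Fin m → ℝ)
    (hz0 : ∀ i j, 0 ≤ z i j)
    (hsupp : ∀ i j, d i j ≠ 0 → 0 < z i j)
    (hneg : ∃ i j, d i j < 0) :
    ∃ t : ℝ, 0 < t ∧ (∀ i j, 0 ≤ z i j + t * d i j) ∧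
      (∃ i j, 0 < z i j ∧ z i j + t * d i j = 0) := by
  obtain ⟨i0, j0, hij0⟩ := hneg
  set F : Finset (Fin n × Fin m) := Finset.univ.filter (fun p => d p.1 p.2 < 0) with hF
  have hFne : F.Nonempty := ⟨(i0, j0), by simp [hF, hij0]⟩
  set g : Fin n × Fin m → ℝ := fun p => z p.1 p.2 / (-(d p.1 p.2)) with hg
  obtain ⟨p0, hp0F, hp0min⟩ := F.exists_min_image g hFne
  have hp0d : d p0.1 p0.2 < 0 := by simpa [hF] using hp0F
  have hp0z : 0 < z p0.1 p0.2 := hsupp _ _ (ne_of_lt hp0d)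
  have hgt : 0 < g p0 := div_pos hp0z (by linarith)
  refine ⟨g p0, hgt, ?_, p0.1, p0.2, hp0z, ?_⟩
  · intro i j
    rcases le_or_gt 0 (d i j) with h | h
    · have : 0 ≤ g p0 * d i j := mul_nonneg hgt.le h
      linarith [hz0 i j]
    · have hmem : (i, j) ∈ F := by simp [hF, h]
      have hle : g p0 ≤ z i j / (-(d i j)) := hp0min (i, j) hmem
      have h' : g p0 * (-(d i j)) ≤ z i j := by
        rwa [← le_div_iff₀ (by linarith)]
      linarith
  · have : g p0 * (-(d p0.1 p0.2)) = z p0.1 p0.2 := by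
      rw [hg]
      rw [div_mul_cancel₀ _ (by simp [ne_of_lt hp0d] : -d p0.1 p0.2 ≠ 0)]
    linarith

lemma expand_sum {n m : ℕ} (f z d : Fin n → Fin m → ℝ) (t : ℝ) :
    ∑ i, ∑ j, f i j * (z i j + t * d i j)
      = (∑ i, ∑ j, f i j * z i j) + t * ∑ i, ∑ j, f i j * d i j := by
  have h : ∀ (i : Fin n) (j : Fin m),
      f i j * (z i j + t * d i j) = f i j * z i j + t * (f i j * d i j) := fun i j => by ring
  simp_rw [h, Finset.sum_add_distrib, Finset.mul_sum]

lemma row_dir {m : ℕ} (j₁ j₂ : Fin m) (α : ℝ) :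
    ∑ j, ((if j = j₁ then α else 0) + (if j = j₂ then -α else 0)) = 0 := by
  rw [Finset.sum_add_distrib]
  simp [Finset.sum_ite_eq']

lemma inner_dir {m : ℕ} (j₁ j₂ : Fin m) (α : ℝ) (g : Fin m → ℝ) :
    ∑ j, g j * ((if j = j₁ then α else 0) + (if j = j₂ then -α else 0))
      = α * (g j₁ - g j₂) := by
  simp only [mul_add, Finset.sum_add_distrib, mul_ite, mul_zero, mul_neg]
  rw [Finset.sum_ite_eq' Finset.univ j₁ (fun j => g j * α)]
  rw [Finset.sum_ite_eq' Finset.univ j₂ (fun j => -(g j * α))]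
  simp; ring

lemma sum_dir {n m : ℕ} (a b : Fin n) (hab : a ≠ b) (j₁ j₂ k₁ k₂ : Fin m)
    (α β : ℝ) (f : Fin n → Fin m → ℝ) :
    ∑ i, ∑ j, f i j *
      ((if i = a then ((if j = j₁ then α else 0) + (if j = j₂ then -α else 0)) else 0) +
       (if i = b then ((if j = k₁ then β else 0) + (if j = k₂ then -β else 0)) else 0))
      = α * (f a j₁ - f a j₂) + β * (f b k₁ - f b k₂) := by
  have h : ∀ i, (∑ j, f i j *
      ((if i = a then ((if j = j₁ then α else 0) + (if j = j₂ then -α else 0)) else 0) +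
       (if i = b then ((if j = k₁ then β else 0) + (if j = k₂ then -β else 0)) else 0)))
      = (if i = a then α * (f i j₁ - f i j₂) else 0) +
        (if i = b then β * (f i k₁ - f i k₂) else 0) := by
    intro i
    by_cases hia : i = a <;> by_cases hib : i = b
    · exact absurd (hia ▸ hib.symm ▸ rfl) hab
    · simp only [hia, hib, if_true, if_false, ite_true, ite_false, add_zero, eq_self_iff_true, if_neg hab]
      exact inner_dir j₁ j₂ α (f a)
    · simp only [hia, hib, if_true, if_false, ite_true, ite_false, zero_add, eq_self_iff_true,
        if_neg (Ne.symm hab)]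
      exact inner_dir k₁ k₂ β (f b)
    · simp [hia, hib]
  rw [Finset.sum_congr rfl (fun i _ => h i), Finset.sum_add_distrib]
  simp [Finset.sum_ite_eq']

/-- MCKP LP relaxation: if feasible, there is an optimal solution in which at
most one group has more than one positive variable. -/
theorem stmt9 (n m : ℕ) (v c : Fin n → Fin m → ℝ) (C : ℝ)
    (hfeas : ∃ z : Fin n → Fin m → ℝ,
      (∀ i j, 0 ≤ z i j) ∧ (∀ i, (∑ j, z i j) = 1) ∧
      (∑ i, ∑ j, c i j * z i j) ≤ C) :
    ∃ z : Fin n → Fin m → ℝ,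
      (∀ i j, 0 ≤ z i j) ∧ (∀ i, (∑ j, z i j) = 1) ∧
      (∑ i, ∑ j, c i j * z i j) ≤ C ∧
      (∀ z' : Fin n → Fin m → ℝ,
        (∀ i j, 0 ≤ z' i j) → (∀ i, (∑ j, z' i j) = 1) →
        (∑ i, ∑ j, c i j * z' i j) ≤ C →
        (∑ i, ∑ j, v i j * z' i j) ≤ ∑ i, ∑ j, v i j * z i j) ∧
      ({i : Fin n | ({j : Fin m | 0 < z i j} : Set (Fin m)).Subsingleton → False} :
        Set (Fin n)).Subsingleton := by
  classical
  set S : Set (Fin n → Fin m → ℝ) := {z | (∀ i j, 0 ≤ z i j) ∧ (∀ i, (∑ j, z i j) = 1) ∧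
      (∑ i, ∑ j, c i j * z i j) ≤ C} with hS
  set f : (Fin n → Fin m → ℝ) → ℝ := fun z => ∑ i, ∑ j, v i j * z i j with hf
  -- existence of a maximizer
  have hexmax : ∃ z ∈ S, IsMaxOn f S z := by
    have hc1 : ∀ (i : Fin n) (j : Fin m), Continuous fun z : Fin n → Fin m → ℝ => z i j :=
      fun i j => (continuous_apply j).comp (continuous_apply i)
    have hcont : Continuous f :=
      continuous_finset_sum _ fun i _ => continuous_finset_sum _ fun j _ =>
        continuous_const.mul (hc1 i j)
    have hclosed : IsClosed S := by
      have hcsum : ∀ i, Continuous fun z : Fin n → Fin m → ℝ => ∑ j, z i j :=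
        fun i => continuous_finset_sum _ fun j _ => hc1 i j
      have hccost : Continuous fun z : Fin n → Fin m → ℝ => ∑ i, ∑ j, c i j * z i j :=
        continuous_finset_sum _ fun i _ => continuous_finset_sum _ fun j _ =>
          continuous_const.mul (hc1 i j)
      have hrep : S = (⋂ i, ⋂ j, {z : Fin n → Fin m → ℝ | 0 ≤ z i j}) ∩
          ((⋂ i, {z : Fin n → Fin m → ℝ | ∑ j, z i j = 1}) ∩
            {z : Fin n → Fin m → ℝ | ∑ i, ∑ j, c i j * z i j ≤ C}) := by
        ext w
        simp only [hS, Set.mem_setOf_eq, Set.mem_inter_iff, Set.mem_iInter]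
      rw [hrep]
      exact ((isClosed_iInter fun i => isClosed_iInter fun j =>
          isClosed_le continuous_const (hc1 i j))).inter
        (((isClosed_iInter fun i => isClosed_eq (hcsum i) continuous_const)).inter
          (isClosed_le hccost continuous_const))
    have hsub : S ⊆ Set.univ.pi (fun _ : Fin n => Set.univ.pi fun _ : Fin m =>
        Set.Icc (0:ℝ) 1) := by
      intro w hw
      simp only [Set.mem_pi, Set.mem_univ, forall_true_left, Set.mem_Icc]
      intro i j
      refine ⟨hw.1 i j, ?_⟩
      calc w i j ≤ ∑ j', w i j' :=
            Finset.single_le_sum (fun j' _ => hw.1 i j') (Finset.mem_univ j)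
        _ = 1 := hw.2.1 i
    have hcomp : IsCompact S :=
      (isCompact_univ_pi fun _ => isCompact_univ_pi fun _ => isCompact_Icc).of_isClosed_subset
        hclosed hsub
    exact hcomp.exists_isMaxOn hfeas hcont.continuousOn
  obtain ⟨z₀, hz₀, hmax₀⟩ := hexmax
  -- choose a maximizer with minimal support
  set P : (Fin n → Fin m → ℝ) → ℕ :=
    fun z => (Finset.univ.filter fun p : Fin n × Fin m => 0 < z p.1 p.2).card with hP
  set T : Set ℕ := {k | ∃ z, z ∈ S ∧ IsMaxOn f S z ∧ P z = k} with hT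
  have hTne : T.Nonempty := ⟨P z₀, z₀, hz₀, hmax₀, rfl⟩
  obtain ⟨z, hzS, hzmax, hzP⟩ := Nat.sInf_mem hTne
  refine ⟨z, hzS.1, hzS.2.1, hzS.2.2, fun z' h1 h2 h3 => hzmax (⟨h1, h2, h3⟩ : z' ∈ S), ?_⟩
  -- the key step: any zero-cost, zero-rowsum direction supported on the support of z
  -- with a negative entry has nonpositive value, and zero value leads to contradiction
  have step : ∀ e : Fin n → Fin m → ℝ, (∀ i, ∑ j, e i j = 0) →
      (∑ i, ∑ j, c i j * e i j) = 0 → (∀ i j, e i j ≠ 0 → 0 < z i j) →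
      (∃ i j, e i j < 0) →
      (∑ i, ∑ j, v i j * e i j) ≤ 0 ∧ ((∑ i, ∑ j, v i j * e i j) = 0 → False) := by
    intro e hrow hcost hsupp hneg
    obtain ⟨t, htpos, hw0, i₁, j₁', hzpos, hwzero⟩ := push_lemma z e hzS.1 hsupp hneg
    set w : Fin n → Fin m → ℝ := fun i j => z i j + t * e i j with hw
    have hwS : w ∈ S := by
      refine ⟨hw0, ?_, ?_⟩
      · intro i
        have : ∑ j, w i j = (∑ j, z i j) + t * ∑ j, e i j := by
          simp_rw [hw, Finset.sum_add_distrib, Finset.mul_sum]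
        rw [this, hrow i, hzS.2.1 i]; ring
      · have : ∑ i, ∑ j, c i j * w i j
            = (∑ i, ∑ j, c i j * z i j) + t * ∑ i, ∑ j, c i j * e i j := expand_sum c z e t
        rw [this, hcost]
        simpa using hzS.2.2
    have hfw : f w = f z + t * ∑ i, ∑ j, v i j * e i j := expand_sum v z e t
    have hle : f w ≤ f z := hzmax hwS
    constructor
    · by_contra hcon
      push_neg at hcon
      nlinarith
    · intro hval
      have hfweq : f w = f z := by rw [hfw, hval]; ring
      have hwmax : IsMaxOn f S w := fun x hx => by
        have := hzmax hx
        simp only [Set.mem_setOf_eq] at this ⊢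
        linarith [hfweq.le, hfweq.ge]
      have hsubset : (Finset.univ.filter fun p : Fin n × Fin m => 0 < w p.1 p.2) ⊆
          (Finset.univ.filter fun p : Fin n × Fin m => 0 < z p.1 p.2) := by
        intro p hp
        simp only [Finset.mem_filter, Finset.mem_univ, true_and] at hp ⊢
        by_cases he : e p.1 p.2 = 0
        · simpa [hw, he] using hp
        · exact hsupp _ _ he
      have hss : (Finset.univ.filter fun p : Fin n × Fin m => 0 < w p.1 p.2) ⊂
          (Finset.univ.filter fun p : Fin n × Fin m => 0 < z p.1 p.2) := by
        rw [Finset.ssubset_iff_of_subset hsubset]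
        refine ⟨(i₁, j₁'), by simpa using hzpos, ?_⟩
        simp only [Finset.mem_filter, Finset.mem_univ, true_and]
        simp [hw, hwzero]
      have hlt : P w < P z := Finset.card_lt_card hss
      have hmemT : P w ∈ T := ⟨w, hwS, hwmax, rfl⟩
      have := Nat.sInf_le hmemT
      omega
  -- now prove the subsingleton property
  intro a ha b hb
  by_contra hab
  obtain ⟨j₁, hj₁, j₂, hj₂, hjne⟩ := Set.not_subsingleton_iff.mp ha
  obtain ⟨k₁, hk₁, k₂, hk₂, hkne⟩ := Set.not_subsingleton_iff.mp hb
  simp only [Set.mem_setOf_eq] at hj₁ hj₂ hk₁ hk₂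
  obtain ⟨α, β, hαβ, hzero⟩ : ∃ α β : ℝ, (α ≠ 0 ∨ β ≠ 0) ∧
      α * (c a j₁ - c a j₂) + β * (c b k₁ - c b k₂) = 0 := by
    by_cases h : c a j₁ - c a j₂ = 0
    · exact ⟨1, 0, Or.inl one_ne_zero, by rw [h]; ring⟩
    · exact ⟨c b k₁ - c b k₂, -(c a j₁ - c a j₂), Or.inr (neg_ne_zero.mpr h), by ring⟩
  set d : Fin n → Fin m → ℝ := fun i j =>
    (if i = a then ((if j = j₁ then α else 0) + (if j = j₂ then -α else 0)) else 0) +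
    (if i = b then ((if j = k₁ then β else 0) + (if j = k₂ then -β else 0)) else 0) with hd
  have hvals : d a j₁ = α ∧ d a j₂ = -α ∧ d b k₁ = β ∧ d b k₂ = -β := by
    refine ⟨?_, ?_, ?_, ?_⟩ <;>
      simp [hd, hab, Ne.symm hab, hjne, Ne.symm hjne, hkne, Ne.symm hkne]
  have hrow : ∀ i, ∑ j, d i j = 0 := by
    intro i
    simp only [hd]
    rw [Finset.sum_add_distrib]
    by_cases hia : i = a <;> by_cases hib : i = b <;>
      simp [hia, hib, row_dir]
  have hcost : ∑ i, ∑ j, c i j * d i j = 0 := by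
    simp only [hd]
    rw [sum_dir a b hab j₁ j₂ k₁ k₂ α β c]
    exact hzero
  have hsupp : ∀ i j, d i j ≠ 0 → 0 < z i j := by
    intro i j hdij
    by_cases hia : i = a
    · subst hia
      by_cases h1 : j = j₁
      · subst h1; exact hj₁
      by_cases h2 : j = j₂
      · subst h2; exact hj₂
      exact absurd (by simp [hd, h1, h2, hab]) hdij
    by_cases hib : i = b
    · subst hib
      by_cases h1 : j = k₁
      · subst h1; exact hk₁
      by_cases h2 : j = k₂
      · subst h2; exact hk₂
      exact absurd (by simp [hd, h1, h2, hia]) hdij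
    exact absurd (by simp [hd, hia, hib]) hdij
  have hnp : (∃ i j, d i j < 0) ∧ (∃ i j, 0 < d i j) := by
    rcases hαβ with hα | hβ
    · rcases hα.lt_or_gt with h | h
      · exact ⟨⟨a, j₁, by rw [hvals.1]; exact h⟩, ⟨a, j₂, by rw [hvals.2.1]; linarith⟩⟩
      · exact ⟨⟨a, j₂, by rw [hvals.2.1]; linarith⟩, ⟨a, j₁, by rw [hvals.1]; exact h⟩⟩
    · rcases hβ.lt_or_gt with h | h
      · exact ⟨⟨b, k₁, by rw [hvals.2.2.1]; exact h⟩, ⟨b, k₂, by rw [hvals.2.2.2]; linarith⟩⟩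
      · exact ⟨⟨b, k₂, by rw [hvals.2.2.2]; linarith⟩, ⟨b, k₁, by rw [hvals.2.2.1]; exact h⟩⟩
  have h1 := step d hrow hcost hsupp hnp.1
  have hnegsum : ∑ i, ∑ j, v i j * -(d i j) = -∑ i, ∑ j, v i j * d i j := by
    simp [mul_neg, Finset.sum_neg_distrib]
  have h2 := step (fun i j => -(d i j)) (fun i => by simp [hrow i])
    (by simp [mul_neg, Finset.sum_neg_distrib, hcost])
    (fun i j h => hsupp i j (by simpa using neg_ne_zero.mp h))
    (by obtain ⟨i, j, h⟩ := hnp.2; exact ⟨i, j, by simpa using h⟩)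
  rw [hnegsum] at h2
  exact h1.2 (le_antisymm h1.1 (by linarith [h2.1]))
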